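/- For each trial index i define C_i := D_{1i}·D_{2i} if (A_i, B_i) ≠ (a′, b) and C_i := −D_{1i}·D_{2i} if (A_i, B_i) = (a′, b). Let i ≥ 2 and let v ∈ {−1, +1}^{i−1} be any vector for which P((C_1, ..., C_{i−1}) = v) > 0. Then, under the per-trial assumptions (E1), (E2*), (E3), (LOC) and the time-sequentiality assumption, P(C_i = +1 | (C_1, ..., C_{i−1}) = v) ≤ 3/4. -/

import Mathlib

open MeasureTheory ProbabilityTheory
open scoped ENNReal

/-- Conditional probability of the event `E` given the sub-σ-algebra `m`:
the conditional expectation of the indicator function of `E`. -/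
noncomputable def cprob {Ω : Type*} [MeasurableSpace Ω] (P : Measure Ω)
    (m : MeasurableSpace Ω) (E : Set Ω) : Ω → ℝ :=
  P[E.indicator (fun _ => (1 : ℝ)) | m]

def Fset {Ω : Type*} (D : Ω → ℝ) (A : Ω → Bool) (d : ℝ) (x : Bool) : Set Ω :=
  {ω | D ω = d ∧ A ω = x}

lemma chsh_aux (a b c d a' b' c' d' : ℝ) (ha : 0 ≤ a) (hb : 0 ≤ b) (hc : 0 ≤ c) (hd : 0 ≤ d)
    (ha' : 0 ≤ a') (hb' : 0 ≤ b') (hc' : 0 ≤ c') (hd' : 0 ≤ d')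
    (h1 : a + a' = 1/2) (h2 : b + b' = 1/2) (h3 : c + c' = 1/2) (h4 : d + d' = 1/2) :
    a*c + a'*c' + (a*d + a'*d') + (b*d + b'*d') + (b*c' + b'*c) ≤ 3/4 := by
  rcases le_total (c + d) (1/2) with h | h
  · nlinarith [mul_nonneg ha (by linarith : (0:ℝ) ≤ 1 - 2*c - 2*d),
      mul_nonneg hd (by linarith : (0:ℝ) ≤ 1 - 2*b), mul_nonneg hb hc]
  · rcases le_total c d with h' | h'
    · nlinarith [mul_nonneg (by linarith : (0:ℝ) ≤ 1/2 - a) (by linarith : (0:ℝ) ≤ 2*c + 2*d - 1),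
        mul_nonneg (by linarith : (0:ℝ) ≤ 1 - 2*b) (by linarith : (0:ℝ) ≤ d - c)]
    · nlinarith [mul_nonneg (by linarith : (0:ℝ) ≤ 1/2 - a) (by linarith : (0:ℝ) ≤ 2*c + 2*d - 1),
        mul_nonneg hb (by linarith : (0:ℝ) ≤ c - d)]

lemma trial_bound {Ω : Type*} {m : MeasurableSpace Ω} [m0 : MeasurableSpace Ω]
    (hm : m ≤ m0) (P : Measure Ω) [IsProbabilityMeasure P]
    (A B : Ω → Bool) (hA : Measurable A) (hB : Measurable B)
    (D1 D2 : Ω → ℝ) (hD1 : Measurable D1) (hD2 : Measurable D2)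
    (hD1v : ∀ ω, D1 ω = 1 ∨ D1 ω = -1) (hD2v : ∀ ω, D2 ω = 1 ∨ D2 ω = -1)
    (hE2A : P {ω | A ω = true} = 1/2) (hE2B : P {ω | B ω = true} = 1/2)
    (hIA : Indep (MeasurableSpace.comap A inferInstance) m P)
    (hIB : Indep (MeasurableSpace.comap B inferInstance) m P)
    (hLOC : ∀ E1 E2 : Set Ω,
      MeasurableSet[MeasurableSpace.comap (fun ω => (D1 ω, A ω)) inferInstance] E1 →
      MeasurableSet[MeasurableSpace.comap (fun ω => (D2 ω, B ω)) inferInstance] E2 →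
      cprob P m (E1 ∩ E2) =ᵐ[P] fun ω => cprob P m E1 ω * cprob P m E2 ω)
    (C : Ω → ℝ)
    (hC : ∀ ω, C ω = if A ω = false ∧ B ω = true
        then -(D1 ω * D2 ω) else D1 ω * D2 ω) :
    ∀ᵐ ω ∂P, cprob P m {ω | C ω = 1} ω ≤ 3/4 := by
  classical
  -- measurability of the basic sets
  have hF1m : ∀ (d : ℝ) (x : Bool), MeasurableSet (Fset D1 A d x) := fun d x =>
    (hD1 (measurableSet_singleton d)).inter (hA (measurableSet_singleton x))
  have hF2m : ∀ (d : ℝ) (x : Bool), MeasurableSet (Fset D2 B d x) := fun d x =>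
    (hD2 (measurableSet_singleton d)).inter (hB (measurableSet_singleton x))
  have hF1c : ∀ (d : ℝ) (x : Bool),
      MeasurableSet[MeasurableSpace.comap (fun ω => (D1 ω, A ω)) inferInstance] (Fset D1 A d x) :=
    fun d x => ⟨{d} ×ˢ {x}, (measurableSet_singleton d).prod (measurableSet_singleton x),
      by ext ω; simp [Fset]⟩
  have hF2c : ∀ (d : ℝ) (x : Bool),
      MeasurableSet[MeasurableSpace.comap (fun ω => (D2 ω, B ω)) inferInstance] (Fset D2 B d x) :=
    fun d x => ⟨{d} ×ˢ {x}, (measurableSet_singleton d).prod (measurableSet_singleton x),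
      by ext ω; simp [Fset]⟩
  have hint : ∀ (S : Set Ω), MeasurableSet S → Integrable (S.indicator fun _ => (1:ℝ)) P :=
    fun S hS => (integrable_const 1).indicator hS
  have hnn : ∀ S : Set Ω, 0 ≤ᵐ[P] cprob P m S := fun S =>
    condExp_nonneg (Filter.Eventually.of_forall fun ω =>
      Set.indicator_nonneg (fun _ _ => zero_le_one) ω)
  -- conditional probability of setting events is 1/2
  have hconst : ∀ (X : Ω → Bool), Measurable X → (∀ x, P {ω | X ω = x} = 1/2) →
      Indep (MeasurableSpace.comap X inferInstance) m P →
      ∀ x : Bool, cprob P m {ω | X ω = x} =ᵐ[P] fun _ => (1/2 : ℝ) := by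
    intro X hX hPX hI x
    have hms : MeasurableSet[MeasurableSpace.comap X inferInstance] {ω | X ω = x} :=
      ⟨{x}, measurableSet_singleton x, by ext ω; simp⟩
    have hsm : StronglyMeasurable[MeasurableSpace.comap X inferInstance]
        ({ω | X ω = x}.indicator fun _ => (1:ℝ)) :=
      stronglyMeasurable_const.indicator hms
    have h := condExp_indep_eq hX.comap_le hm hsm hI
    refine h.trans (Filter.Eventually.of_forall fun ω => ?_)
    have : ∫ ω, ({ω | X ω = x}.indicator fun _ => (1:ℝ)) ω ∂P
        = (P {ω | X ω = x}).toReal := integral_indicator_one (hX (measurableSet_singleton x))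
    simp only [this, hPX x]
    norm_num [ENNReal.toReal_div]
  have hPA : ∀ x, P {ω | A ω = x} = 1/2 := by
    intro x; cases x
    · have hms : MeasurableSet {ω | A ω = true} := hA (measurableSet_singleton true)
      have he : {ω | A ω = false} = {ω | A ω = true}ᶜ := by ext ω; simp
      rw [he, measure_compl hms (measure_ne_top P _), measure_univ, hE2A,
        ENNReal.sub_half ENNReal.one_ne_top]
    · exact hE2A
  have hPB : ∀ x, P {ω | B ω = x} = 1/2 := by
    intro x; cases x
    · have hms : MeasurableSet {ω | B ω = true} := hB (measurableSet_singleton true)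
      have he : {ω | B ω = false} = {ω | B ω = true}ᶜ := by ext ω; simp
      rw [he, measure_compl hms (measure_ne_top P _), measure_univ, hE2B,
        ENNReal.sub_half ENNReal.one_ne_top]
    · exact hE2B
  have hAconst := hconst A hA hPA hIA
  have hBconst := hconst B hB hPB hIB
  -- splitting the setting events according to the outcome
  have hsplit : ∀ (D : Ω → ℝ) (X : Ω → Bool), (∀ ω, D ω = 1 ∨ D ω = -1) → ∀ x : Bool,
      ({ω | X ω = x}.indicator fun _ => (1:ℝ))
        = (Fset D X 1 x).indicator (fun _ => (1:ℝ)) + (Fset D X (-1) x).indicator (fun _ => (1:ℝ)) := by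
    intro D X hDv x
    funext ω
    rcases hDv ω with h | h <;> by_cases hx : X ω = x <;>
      simp [Set.indicator_apply, Fset, h, hx] <;> norm_num
  have hsplitA : ∀ x : Bool, cprob P m {ω | A ω = x} =ᵐ[P]
      cprob P m (Fset D1 A 1 x) + cprob P m (Fset D1 A (-1) x) := by
    intro x
    have : cprob P m {ω | A ω = x}
        = P[(Fset D1 A 1 x).indicator (fun _ => (1:ℝ)) + (Fset D1 A (-1) x).indicator (fun _ => (1:ℝ)) | m] := by
      unfold cprob; rw [hsplit D1 A hD1v x]
    rw [this]
    exact condExp_add (hint _ (hF1m 1 x)) (hint _ (hF1m (-1) x)) m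
  have hsplitB : ∀ x : Bool, cprob P m {ω | B ω = x} =ᵐ[P]
      cprob P m (Fset D2 B 1 x) + cprob P m (Fset D2 B (-1) x) := by
    intro x
    have : cprob P m {ω | B ω = x}
        = P[(Fset D2 B 1 x).indicator (fun _ => (1:ℝ)) + (Fset D2 B (-1) x).indicator (fun _ => (1:ℝ)) | m] := by
      unfold cprob; rw [hsplit D2 B hD2v x]
    rw [this]
    exact condExp_add (hint _ (hF2m 1 x)) (hint _ (hF2m (-1) x)) m
  -- the eight pieces
  set S1 := Fset D1 A 1 true ∩ Fset D2 B 1 true with hS1def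
  set S2 := Fset D1 A (-1) true ∩ Fset D2 B (-1) true with hS2def
  set S3 := Fset D1 A 1 true ∩ Fset D2 B 1 false with hS3def
  set S4 := Fset D1 A (-1) true ∩ Fset D2 B (-1) false with hS4def
  set S5 := Fset D1 A 1 false ∩ Fset D2 B 1 false with hS5def
  set S6 := Fset D1 A (-1) false ∩ Fset D2 B (-1) false with hS6def
  set S7 := Fset D1 A 1 false ∩ Fset D2 B (-1) true with hS7def
  set S8 := Fset D1 A (-1) false ∩ Fset D2 B 1 true with hS8def
  have hdecomp : {ω | C ω = 1}.indicator (fun _ => (1:ℝ))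
      = S1.indicator (fun _ => (1:ℝ)) + S2.indicator (fun _ => (1:ℝ))
        + S3.indicator (fun _ => (1:ℝ)) + S4.indicator (fun _ => (1:ℝ))
        + S5.indicator (fun _ => (1:ℝ)) + S6.indicator (fun _ => (1:ℝ))
        + S7.indicator (fun _ => (1:ℝ)) + S8.indicator (fun _ => (1:ℝ)) := by
    funext ω
    simp only [Pi.add_apply]
    rcases hD1v ω with h1 | h1 <;> rcases hD2v ω with h2 | h2 <;>
      cases hA' : A ω <;> cases hB' : B ω <;>
      simp [hS1def, hS2def, hS3def, hS4def, hS5def, hS6def, hS7def, hS8def,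
        Set.indicator_apply, Set.mem_inter_iff, Fset, hC ω, h1, h2, hA', hB'] <;>
      norm_num
  have i1 := hint S1 ((hF1m 1 true).inter (hF2m 1 true))
  have i2 := hint S2 ((hF1m (-1) true).inter (hF2m (-1) true))
  have i3 := hint S3 ((hF1m 1 true).inter (hF2m 1 false))
  have i4 := hint S4 ((hF1m (-1) true).inter (hF2m (-1) false))
  have i5 := hint S5 ((hF1m 1 false).inter (hF2m 1 false))
  have i6 := hint S6 ((hF1m (-1) false).inter (hF2m (-1) false))
  have i7 := hint S7 ((hF1m 1 false).inter (hF2m (-1) true))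
  have i8 := hint S8 ((hF1m (-1) false).inter (hF2m 1 true))
  have e2 := condExp_add (m := m) i1 i2
  have e3 := condExp_add (m := m) (i1.add i2) i3
  have e4 := condExp_add (m := m) ((i1.add i2).add i3) i4
  have e5 := condExp_add (m := m) (((i1.add i2).add i3).add i4) i5
  have e6 := condExp_add (m := m) ((((i1.add i2).add i3).add i4).add i5) i6
  have e7 := condExp_add (m := m) (((((i1.add i2).add i3).add i4).add i5).add i6) i7
  have e8 := condExp_add (m := m) ((((((i1.add i2).add i3).add i4).add i5).add i6).add i7) i8
  have hrw : cprob P m {ω | C ω = 1}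
      = P[S1.indicator (fun _ => (1:ℝ)) + S2.indicator (fun _ => (1:ℝ))
        + S3.indicator (fun _ => (1:ℝ)) + S4.indicator (fun _ => (1:ℝ))
        + S5.indicator (fun _ => (1:ℝ)) + S6.indicator (fun _ => (1:ℝ))
        + S7.indicator (fun _ => (1:ℝ)) + S8.indicator (fun _ => (1:ℝ)) | m] := by
    unfold cprob; rw [hdecomp]
  have hsum8 : cprob P m {ω | C ω = 1} =ᵐ[P] fun ω =>
      cprob P m S1 ω + cprob P m S2 ω + cprob P m S3 ω + cprob P m S4 ω
      + cprob P m S5 ω + cprob P m S6 ω + cprob P m S7 ω + cprob P m S8 ω := by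
    rw [hrw]
    filter_upwards [e2, e3, e4, e5, e6, e7, e8] with ω h2 h3 h4 h5 h6 h7 h8
    simp only [Pi.add_apply] at h2 h3 h4 h5 h6 h7 h8 ⊢
    rw [h8, h7, h6, h5, h4, h3, h2]
    rfl
  have l1 := hLOC _ _ (hF1c 1 true) (hF2c 1 true)
  have l2 := hLOC _ _ (hF1c (-1) true) (hF2c (-1) true)
  have l3 := hLOC _ _ (hF1c 1 true) (hF2c 1 false)
  have l4 := hLOC _ _ (hF1c (-1) true) (hF2c (-1) false)
  have l5 := hLOC _ _ (hF1c 1 false) (hF2c 1 false)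
  have l6 := hLOC _ _ (hF1c (-1) false) (hF2c (-1) false)
  have l7 := hLOC _ _ (hF1c 1 false) (hF2c (-1) true)
  have l8 := hLOC _ _ (hF1c (-1) false) (hF2c 1 true)
  filter_upwards [hsum8, l1, l2, l3, l4, l5, l6, l7, l8,
    hsplitA true, hsplitA false, hsplitB true, hsplitB false,
    hAconst true, hAconst false, hBconst true, hBconst false,
    hnn (Fset D1 A 1 true), hnn (Fset D1 A (-1) true),
    hnn (Fset D1 A 1 false), hnn (Fset D1 A (-1) false),
    hnn (Fset D2 B 1 true), hnn (Fset D2 B (-1) true),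
    hnn (Fset D2 B 1 false), hnn (Fset D2 B (-1) false)] with ω hsum hl1 hl2 hl3 hl4
      hl5 hl6 hl7 hl8 hsA1 hsA2 hsB1 hsB2 hcA1 hcA2 hcB1 hcB2 n1 n2 n3 n4 n5 n6 n7 n8
  simp only [Pi.add_apply] at hsA1 hsA2 hsB1 hsB2
  rw [hcA1] at hsA1
  rw [hcA2] at hsA2
  rw [hcB1] at hsB1
  rw [hcB2] at hsB2
  rw [hsum, hl1, hl2, hl3, hl4, hl5, hl6, hl7, hl8]
  have := chsh_aux (cprob P m (Fset D1 A 1 true) ω) (cprob P m (Fset D1 A 1 false) ω)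
    (cprob P m (Fset D2 B 1 true) ω) (cprob P m (Fset D2 B 1 false) ω)
    (cprob P m (Fset D1 A (-1) true) ω) (cprob P m (Fset D1 A (-1) false) ω)
    (cprob P m (Fset D2 B (-1) true) ω) (cprob P m (Fset D2 B (-1) false) ω)
    n1 n3 n5 n7 n2 n4 n6 n8 hsA1.symm hsA2.symm hsB1.symm hsB2.symm
  linarith

/-- repeated-trials setting (trials indexed by `ℕ`, trial `i+1` of the
paper being index `i` here).  With `C_i := D_{1i}·D_{2i}` except `C_i := −D_{1i}·D_{2i}`
when `(A_i,B_i) = (a′,b)`, under the per-trial assumptions (E1), (E2*), (E3), (LOC)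
and time sequentiality, for every `i ≥ 1` and every `±1`-vector `v` of length `i`
with `P((C_0,…,C_{i−1}) = v) > 0`,
`P(C_i = +1 | (C_0,…,C_{i−1}) = v) ≤ 3/4`.
Settings `a, a′` are modelled by `true, false : Bool` (likewise `b, b′`). -/
theorem stmt9 {Ω : Type*} [MeasurableSpace Ω] (P : Measure Ω) [IsProbabilityMeasure P]
    {Λ : ℕ → Type*} [∀ n, MeasurableSpace (Λ n)] (lam : ∀ n, Ω → Λ n)
    (hlam : ∀ n, Measurable (lam n))
    (A B : ℕ → Ω → Bool) (hA : ∀ n, Measurable (A n)) (hB : ∀ n, Measurable (B n))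
    (D1 D2 : ℕ → Ω → ℝ) (hD1 : ∀ n, Measurable (D1 n)) (hD2 : ∀ n, Measurable (D2 n))
    (hD1v : ∀ n ω, D1 n ω = 1 ∨ D1 n ω = -1) (hD2v : ∀ n ω, D2 n ω = 1 ∨ D2 n ω = -1)
    (hE1 : ∀ n, IndepFun (A n) (B n) P)
    (hE2 : ∀ n, P {ω | A n ω = true} = 1/2 ∧ P {ω | B n ω = true} = 1/2)
    (hE3 : ∀ n, IndepFun (A n) (lam n) P ∧ IndepFun (B n) (lam n) P)
    (hLOC : ∀ n, ∀ E1 E2 : Set Ω,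
      MeasurableSet[MeasurableSpace.comap (fun ω => (D1 n ω, A n ω)) inferInstance] E1 →
      MeasurableSet[MeasurableSpace.comap (fun ω => (D2 n ω, B n ω)) inferInstance] E2 →
      cprob P (MeasurableSpace.comap (lam n) inferInstance) (E1 ∩ E2) =ᵐ[P]
        fun ω => cprob P (MeasurableSpace.comap (lam n) inferInstance) E1 ω *
          cprob P (MeasurableSpace.comap (lam n) inferInstance) E2 ω)
    (hTS : ∀ n j, j < n →
      MeasurableSet[MeasurableSpace.comap (lam n) inferInstance] {ω | D1 j ω = 1} ∧
      MeasurableSet[MeasurableSpace.comap (lam n) inferInstance] {ω | D1 j ω = -1} ∧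
      MeasurableSet[MeasurableSpace.comap (lam n) inferInstance] {ω | D2 j ω = 1} ∧
      MeasurableSet[MeasurableSpace.comap (lam n) inferInstance] {ω | D2 j ω = -1} ∧
      MeasurableSet[MeasurableSpace.comap (lam n) inferInstance] {ω | A j ω = true} ∧
      MeasurableSet[MeasurableSpace.comap (lam n) inferInstance] {ω | A j ω = false} ∧
      MeasurableSet[MeasurableSpace.comap (lam n) inferInstance] {ω | B j ω = true} ∧
      MeasurableSet[MeasurableSpace.comap (lam n) inferInstance] {ω | B j ω = false})
    (C : ℕ → Ω → ℝ)
    (hC : ∀ n ω, C n ω = if A n ω = false ∧ B n ω = true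
        then -(D1 n ω * D2 n ω) else D1 n ω * D2 n ω)
    (i : ℕ) (hi : 1 ≤ i) (v : Fin i → ℝ) (hv : ∀ j, v j = 1 ∨ v j = -1)
    (hpos : 0 < P {ω | ∀ j : Fin i, C j ω = v j}) :
    P[|{ω | ∀ j : Fin i, C j ω = v j}] {ω | C i ω = 1} ≤ 3/4 := by
  classical
  have hm : MeasurableSpace.comap (lam i) inferInstance ≤ ‹MeasurableSpace Ω› :=
    (hlam i).comap_le
  -- the single-trial bound
  have hmain : ∀ᵐ ω ∂P, cprob P (MeasurableSpace.comap (lam i) inferInstance) {ω | C i ω = 1} ω ≤ 3/4 :=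
    trial_bound (m := MeasurableSpace.comap (lam i) inferInstance) hm P (A i) (B i) (hA i) (hB i) (D1 i) (D2 i) (hD1 i) (hD2 i)
      (hD1v i) (hD2v i) (hE2 i).1 (hE2 i).2 (hE3 i).1 (hE3 i).2 (hLOC i) (C i) (hC i)
  -- the conditioning event is measurable w.r.t. m
  have hVj : ∀ j : Fin i, MeasurableSet[MeasurableSpace.comap (lam i) inferInstance] {ω | C (j : ℕ) ω = v j} := by
    intro j
    obtain ⟨t1, t2, t3, t4, t5, t6, t7, t8⟩ := hTS i j j.2
    rcases hv j with h | h <;> rw [h]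
    · have he : {ω | C (j : ℕ) ω = 1}
          = ({ω | A (j:ℕ) ω = false} ∩ {ω | B (j:ℕ) ω = true}
              ∩ (({ω | D1 (j:ℕ) ω = 1} ∩ {ω | D2 (j:ℕ) ω = -1})
                ∪ ({ω | D1 (j:ℕ) ω = -1} ∩ {ω | D2 (j:ℕ) ω = 1})))
            ∪ (({ω | A (j:ℕ) ω = true} ∪ {ω | B (j:ℕ) ω = false})
              ∩ (({ω | D1 (j:ℕ) ω = 1} ∩ {ω | D2 (j:ℕ) ω = 1})
                ∪ ({ω | D1 (j:ℕ) ω = -1} ∩ {ω | D2 (j:ℕ) ω = -1}))) := by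
        ext ω
        rcases hD1v j ω with h1 | h1 <;> rcases hD2v j ω with h2 | h2 <;>
          cases hA' : A (j:ℕ) ω <;> cases hB' : B (j:ℕ) ω <;>
          simp [hC (j:ℕ) ω, h1, h2, hA', hB'] <;> norm_num
      rw [he]
      exact ((t6.inter t7).inter ((t1.inter t4).union (t2.inter t3))).union
        ((t5.union t8).inter ((t1.inter t3).union (t2.inter t4)))
    · have he : {ω | C (j : ℕ) ω = -1}
          = ({ω | A (j:ℕ) ω = false} ∩ {ω | B (j:ℕ) ω = true}
              ∩ (({ω | D1 (j:ℕ) ω = 1} ∩ {ω | D2 (j:ℕ) ω = 1})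
                ∪ ({ω | D1 (j:ℕ) ω = -1} ∩ {ω | D2 (j:ℕ) ω = -1})))
            ∪ (({ω | A (j:ℕ) ω = true} ∪ {ω | B (j:ℕ) ω = false})
              ∩ (({ω | D1 (j:ℕ) ω = 1} ∩ {ω | D2 (j:ℕ) ω = -1})
                ∪ ({ω | D1 (j:ℕ) ω = -1} ∩ {ω | D2 (j:ℕ) ω = 1}))) := by
        ext ω
        rcases hD1v j ω with h1 | h1 <;> rcases hD2v j ω with h2 | h2 <;>
          cases hA' : A (j:ℕ) ω <;> cases hB' : B (j:ℕ) ω <;>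
          simp [hC (j:ℕ) ω, h1, h2, hA', hB'] <;> norm_num
      rw [he]
      exact ((t6.inter t7).inter ((t1.inter t3).union (t2.inter t4))).union
        ((t5.union t8).inter ((t1.inter t4).union (t2.inter t3)))
  have hVm : MeasurableSet[MeasurableSpace.comap (lam i) inferInstance] {ω | ∀ j : Fin i, C (j:ℕ) ω = v j} := by
    have : {ω | ∀ j : Fin i, C (j:ℕ) ω = v j} = ⋂ j : Fin i, {ω | C (j:ℕ) ω = v j} := by
      ext ω; simp
    rw [this]
    exact MeasurableSet.iInter hVj
  have hV : MeasurableSet {ω | ∀ j : Fin i, C (j:ℕ) ω = v j} := hm _ hVm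
  -- measurability of the target event
  have hCim : Measurable (C i) := by
    have : C i = fun ω => if A i ω = false ∧ B i ω = true
        then -(D1 i ω * D2 i ω) else D1 i ω * D2 i ω := funext (hC i)
    rw [this]
    exact Measurable.ite
      ((hA i (measurableSet_singleton false)).inter (hB i (measurableSet_singleton true)))
      (((hD1 i).mul (hD2 i)).neg) ((hD1 i).mul (hD2 i))
  have hE : MeasurableSet {ω | C i ω = 1} := hCim (measurableSet_singleton 1)
  set V := {ω | ∀ j : Fin i, C (j:ℕ) ω = v j} with hVdef
  set E := {ω | C i ω = 1} with hEdef
  have hintE : Integrable (E.indicator fun _ => (1:ℝ)) P := (integrable_const 1).indicator hE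
  have h1 : ∫ ω in V, cprob P (MeasurableSpace.comap (lam i) inferInstance) E ω ∂P = (P (E ∩ V)).toReal := by
    rw [show ∫ ω in V, cprob P (MeasurableSpace.comap (lam i) inferInstance) E ω ∂P
        = ∫ ω in V, E.indicator (fun _ => (1:ℝ)) ω ∂P from setIntegral_condExp hm hintE hVm]
    rw [integral_indicator_const (1:ℝ) hE, measureReal_def, Measure.restrict_apply hE, smul_eq_mul, mul_one]
  have h2 : ∫ ω in V, cprob P (MeasurableSpace.comap (lam i) inferInstance) E ω ∂P ≤ ∫ ω in V, (3/4 : ℝ) ∂P :=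
    integral_mono_ae integrable_condExp.integrableOn (integrableOn_const
      (measure_lt_top P V).ne) (ae_restrict_of_ae hmain)
  have h3 : (∫ ω in V, (3/4 : ℝ) ∂P) = (P V).toReal * (3/4) := by
    rw [setIntegral_const, smul_eq_mul, measureReal_def]
  have hVfin : P V ≠ ∞ := measure_ne_top P V
  have hVne : P V ≠ 0 := hpos.ne'
  have key : P (V ∩ E) ≤ 3/4 * P V := by
    have hfin2 : (3/4 : ℝ≥0∞) * P V ≠ ∞ := ENNReal.mul_ne_top ((ENNReal.div_lt_top (by norm_num) (by norm_num)).ne) hVfin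
    rw [← ENNReal.toReal_le_toReal (measure_ne_top _ _) hfin2, ENNReal.toReal_mul]
    have h34 : ((3/4 : ℝ≥0∞)).toReal = 3/4 := by norm_num [ENNReal.toReal_div]
    rw [h34, Set.inter_comm]
    calc (P (E ∩ V)).toReal = ∫ ω in V, cprob P (MeasurableSpace.comap (lam i) inferInstance) E ω ∂P := h1.symm
      _ ≤ (P V).toReal * (3/4) := h2.trans_eq h3
      _ = 3/4 * (P V).toReal := by ring
  rw [ProbabilityTheory.cond_apply hV P]
  calc (P V)⁻¹ * P (V ∩ E) ≤ (P V)⁻¹ * (3/4 * P V) := mul_le_mul_right key _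
    _ = 3/4 * ((P V)⁻¹ * P V) := by ring
    _ = 3/4 := by rw [ENNReal.inv_mul_cancel hVne hVfin, mul_one]
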